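/- A function u : Ω → (-∞,+∞] on an H-convex set Ω is ℓ-H-semiconvex if and only if the function g ↦ u(g) + ℓ‖ξ₁(g)‖² is H-convex, where the key algebraic identity is: (1-λ)‖ξ₁(g)‖² + λ‖ξ₁(g')‖² - ‖ξ₁(g·δ_λ(g⁻¹g'))‖² = λ(1-λ)‖ξ₁(g) - ξ₁(g')‖² for all g, g' ∈ H_g, λ ∈ [0,1]. -/

import Mathlib

noncomputable def hmul (g g' : ℝ × ℝ × ℝ) : ℝ × ℝ × ℝ :=
  (g.1 + g'.1, g.2.1 + g'.2.1, g.2.2 + g'.2.2 + (g.1 * g'.2.1 - g'.1 * g.2.1) / 2)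

noncomputable def hinv (g : ℝ × ℝ × ℝ) : ℝ × ℝ × ℝ := (-g.1, -g.2.1, -g.2.2)

noncomputable def dil (l : ℝ) (g : ℝ × ℝ × ℝ) : ℝ × ℝ × ℝ :=
  (l * g.1, l * g.2.1, l ^ 2 * g.2.2)

/-- The horizontal plane through `g`. -/
def HP (g : ℝ × ℝ × ℝ) : Set (ℝ × ℝ × ℝ) :=
  {g' | g'.2.2 = g.2.2 + (g.1 * g'.2.1 - g'.1 * g.2.1) / 2}

/-- Projection on the first layer. -/
noncomputable def xi1 (g : ℝ × ℝ × ℝ) : ℝ × ℝ := (g.1, g.2.1)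

/-- The twisted convex combination `σ_{g,g'}(λ) = g · δ_λ(g⁻¹ g')`. -/
noncomputable def tcc (g g' : ℝ × ℝ × ℝ) (l : ℝ) : ℝ × ℝ × ℝ :=
  hmul g (dil l (hmul (hinv g) g'))

/-- Squared Euclidean norm on the first layer. -/
noncomputable def sqnorm (p : ℝ × ℝ) : ℝ := p.1 ^ 2 + p.2 ^ 2

/-- Multiplication by a nonnegative real distributes over adding a real in `EReal`. -/
lemma ereal_mul_add_coe (r : ℝ) (hr : 0 ≤ r) (x : EReal) (s : ℝ) :
    (r : EReal) * (x + (s : EReal)) = (r : EReal) * x + ((r * s : ℝ) : EReal) := by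
  induction x using EReal.rec with
  | bot =>
      rcases eq_or_lt_of_le hr with h | h
      · simp [← h]
      · rw [EReal.bot_add, EReal.mul_bot_of_pos (by exact_mod_cast h), EReal.bot_add]
  | coe y => norm_cast; ring
  | top =>
      rcases eq_or_lt_of_le hr with h | h
      · simp [← h]
      · rw [EReal.top_add_coe, EReal.mul_top_of_pos (by exact_mod_cast h), EReal.top_add_coe]

lemma ereal_add_coe_le_add_coe (a b : EReal) (c : ℝ) :
    a + (c : EReal) ≤ b + (c : EReal) ↔ a ≤ b := by
  constructor
  · intro h
    rw [add_comm a, add_comm b] at h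
    exact ((EReal.addLECancellable_coe c).add_le_add_iff_left).1 h
  · intro h
    exact add_le_add_left h _

/-- `u` is `ℓ` H-semiconvex on an H-convex set `Ω` iff `g ↦ u g + ℓ‖ξ₁ g‖²` is
H-convex on `Ω`; the key algebraic identity
`(1-λ)‖ξ₁ g‖² + λ‖ξ₁ g'‖² - ‖ξ₁(σ_{g,g'}(λ))‖² = λ(1-λ)‖ξ₁ g - ξ₁ g'‖²`
holds on horizontal segments. -/
theorem Hsemiconvex_iff_shift_Hconvex (Ω : Set (ℝ × ℝ × ℝ))
    (hΩ : ∀ g ∈ Ω, ∀ g' ∈ HP g ∩ Ω, ∀ l ∈ Set.Icc (0 : ℝ) 1, tcc g g' l ∈ Ω)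
    (u : ℝ × ℝ × ℝ → EReal) (ℓ : ℝ) (hℓ : 0 < ℓ) :
    (∀ g : ℝ × ℝ × ℝ, ∀ g' ∈ HP g, ∀ l ∈ Set.Icc (0 : ℝ) 1,
      (1 - l) * sqnorm (xi1 g) + l * sqnorm (xi1 g') - sqnorm (xi1 (tcc g g' l)) =
        l * (1 - l) * sqnorm (xi1 g - xi1 g')) ∧
    ((∀ g ∈ Ω, ∀ g' ∈ HP g ∩ Ω, ∀ l ∈ Set.Icc (0 : ℝ) 1,
        u (tcc g g' l) ≤ ((1 - l : ℝ) : EReal) * u g + ((l : ℝ) : EReal) * u g' +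
          ((ℓ * l * (1 - l) * sqnorm (xi1 (hmul (hinv g) g')) : ℝ) : EReal)) ↔
      (∀ g ∈ Ω, ∀ g' ∈ HP g ∩ Ω, ∀ l ∈ Set.Icc (0 : ℝ) 1,
        u (tcc g g' l) + ((ℓ * sqnorm (xi1 (tcc g g' l)) : ℝ) : EReal) ≤
          ((1 - l : ℝ) : EReal) * (u g + ((ℓ * sqnorm (xi1 g) : ℝ) : EReal)) +
            ((l : ℝ) : EReal) * (u g' + ((ℓ * sqnorm (xi1 g') : ℝ) : EReal)))) := by
  constructor
  · intro g g' _ l _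
    simp only [tcc, hmul, hinv, dil, xi1, sqnorm, Prod.mk_sub_mk, Prod.fst_sub, Prod.snd_sub]
    ring
  · have key : ∀ (g g' : ℝ × ℝ × ℝ) (l : ℝ), l ∈ Set.Icc (0:ℝ) 1 →
      (((1 - l : ℝ) : EReal) * (u g + ((ℓ * sqnorm (xi1 g) : ℝ) : EReal)) +
        ((l : ℝ) : EReal) * (u g' + ((ℓ * sqnorm (xi1 g') : ℝ) : EReal)))
      = (((1 - l : ℝ) : EReal) * u g + ((l : ℝ) : EReal) * u g' +
          ((ℓ * l * (1 - l) * sqnorm (xi1 (hmul (hinv g) g')) : ℝ) : EReal)) +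
        ((ℓ * sqnorm (xi1 (tcc g g' l)) : ℝ) : EReal) := by
      intro g g' l hl
      rw [ereal_mul_add_coe _ (by linarith [hl.2]) , ereal_mul_add_coe _ hl.1]
      have hid : (1 - l) * (ℓ * sqnorm (xi1 g)) + l * (ℓ * sqnorm (xi1 g'))
          = (ℓ * l * (1 - l) * sqnorm (xi1 (hmul (hinv g) g')) +
              ℓ * sqnorm (xi1 (tcc g g' l))) := by
        simp only [tcc, hmul, hinv, dil, xi1, sqnorm]
        ring
      calc ((1 - l : ℝ) : EReal) * u g + ((1 - l) * (ℓ * sqnorm (xi1 g)) : ℝ) +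
            (((l : ℝ) : EReal) * u g' + ((l * (ℓ * sqnorm (xi1 g')) : ℝ) : EReal))
          = (((1 - l : ℝ) : EReal) * u g + ((l : ℝ) : EReal) * u g') +
            (((1 - l) * (ℓ * sqnorm (xi1 g)) + l * (ℓ * sqnorm (xi1 g')) : ℝ) : EReal) := by
            rw [EReal.coe_add]; abel
        _ = _ := by rw [hid, EReal.coe_add, ← add_assoc]
    constructor
    · intro h g hg g' hg' l hl
      rw [key g g' l hl, ereal_add_coe_le_add_coe]
      exact h g hg g' hg' l hl
    · intro h g hg g' hg' l hl
      have := h g hg g' hg' l hl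
      rw [key g g' l hl, ereal_add_coe_le_add_coe] at this
      exact this
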